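/- Let G be a connected simple graph on n vertices with m edges and α : V → ℕ. Then the number of α-orientations of G is at most 2^(m−n+1). -/

import Mathlib

open SimpleGraph

/-- `D` is an orientation of the simple graph `G`, given as the set of directed
edges: for every edge `{a,b}` of `G` exactly one of `(a,b)`, `(b,a)` belongs to `D`,
and `D` contains only pairs corresponding to edges of `G`. -/
def IsOrient {V : Type*} (G : SimpleGraph V) (D : Finset (V × V)) : Prop :=
  (∀ p ∈ D, G.Adj p.1 p.2) ∧ ∀ a b : V, G.Adj a b → ((a, b) ∈ D ↔ (b, a) ∉ D)

/-- The out-degree of `v` in the orientation `D`. -/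
def outD {V : Type*} [DecidableEq V] (D : Finset (V × V)) (v : V) : ℕ :=
  (D.filter (fun p => p.1 = v)).card


private lemma connected_of_delete {V : Type*} {G : SimpleGraph V} (h : G.Connected) {v w : V}
    (hr : (G \ SimpleGraph.fromEdgeSet {s(v, w)}).Reachable v w) :
    (G \ SimpleGraph.fromEdgeSet {s(v, w)}).Connected := by
  rw [connected_iff]
  refine ⟨?_, h.nonempty⟩
  have step : ∀ {a b : V}, G.Adj a b →
      (G \ SimpleGraph.fromEdgeSet {s(v, w)}).Reachable a b := by
    intro a b hab
    by_cases he : s(a, b) = s(v, w)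
    · rw [Sym2.eq_iff] at he
      rcases he with ⟨rfl, rfl⟩ | ⟨rfl, rfl⟩
      · exact hr
      · exact hr.symm
    · refine Adj.reachable ?_
      rw [sdiff_adj, fromEdgeSet_adj]
      exact ⟨hab, by simp [he]⟩
  intro a b
  obtain ⟨p⟩ := h.preconnected a b
  induction p with
  | nil => exact Reachable.refl _
  | cons hadj q ih => exact (step hadj).trans ih

private lemma exists_spanning_tree {V : Type*} [Fintype V] (G : SimpleGraph V)
    (h : G.Connected) : ∃ T : SimpleGraph V, T ≤ G ∧ T.IsTree := by
  classical
  suffices H : ∀ (n : ℕ) (G : SimpleGraph V), G.edgeSet.ncard ≤ n → G.Connected →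
      ∃ T, T ≤ G ∧ T.IsTree from H _ G le_rfl h
  intro n
  induction n with
  | zero =>
    intro G hle hc
    have hbot : G = ⊥ := by
      rw [← edgeSet_eq_empty]
      exact (Set.ncard_eq_zero (Set.toFinite _)).mp (Nat.le_zero.mp hle)
    exact ⟨G, le_rfl, hc, by rw [hbot]; exact isAcyclic_bot⟩
  | succ n ih =>
    intro G hle hc
    by_cases hac : G.IsAcyclic
    · exact ⟨G, le_rfl, hc, hac⟩
    · rw [isAcyclic_iff_forall_adj_isBridge] at hac
      push_neg at hac
      obtain ⟨v, w, hadj, hnb⟩ := hac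
      have hr : (G \ SimpleGraph.fromEdgeSet {s(v, w)}).Reachable v w := by
        by_contra hnr
        exact hnb (isBridge_iff.mpr hnr)
      set G' := G \ SimpleGraph.fromEdgeSet {s(v, w)} with hG'
      have hc' : G'.Connected := connected_of_delete hc hr
      have hedge : G'.edgeSet = G.edgeSet \ {s(v, w)} := by
        rw [hG', edgeSet_sdiff, edgeSet_fromEdgeSet, edgeSet_sdiff_sdiff_isDiag]
      have hcard : G'.edgeSet.ncard ≤ n := by
        have hlt : (G.edgeSet \ {s(v, w)}).ncard < G.edgeSet.ncard :=
          Set.ncard_diff_singleton_lt_of_mem hadj (Set.toFinite _)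
        rw [hedge]
        omega
      obtain ⟨T, hT, hTree⟩ := ih G' hcard hc'
      exact ⟨T, hT.trans sdiff_le, hTree⟩

private lemma key_inj {V : Type*} [Fintype V] [DecidableEq V]
    (G T : SimpleGraph V) (hTG : T ≤ G) (hTree : T.IsTree) (α : V → ℕ)
    (D1 D2 : Finset (V × V)) (h1 : IsOrient G D1) (h2 : IsOrient G D2)
    (ho1 : ∀ v, outD D1 v = α v) (ho2 : ∀ v, outD D2 v = α v)
    (hagree : ∀ a b : V, G.Adj a b → ¬T.Adj a b → ((a, b) ∈ D1 ↔ (a, b) ∈ D2)) :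
    D1 = D2 := by
  classical
  by_contra hne
  haveI : Nonempty V := hTree.1.nonempty
  set r : V := Classical.arbitrary V with hr
  -- the "difference" predicate
  set Dif : V → V → Prop := fun a b => G.Adj a b ∧ ¬((a, b) ∈ D1 ↔ (a, b) ∈ D2) with hDif
  have hsw : ∀ a b, Dif a b → Dif b a := by
    intro a b ⟨hab, hd⟩
    refine ⟨hab.symm, ?_⟩
    have e1 := h1.2 a b hab
    have e2 := h2.2 a b hab
    have f1 := h1.2 b a hab.symm
    have f2 := h2.2 b a hab.symm
    tauto
  have hTadj : ∀ a b, Dif a b → T.Adj a b := by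
    intro a b ⟨hab, hd⟩
    by_contra hT
    exact hd (hagree a b hab hT)
  -- per-vertex counts
  set OutS : V → Finset (V × V) → Finset (V × V) :=
    fun v D => D.filter (fun p => p.1 = v ∧ ¬(p ∈ D1 ↔ p ∈ D2)) with hOutS
  set InS : V → Finset (V × V) → Finset (V × V) :=
    fun v D => D.filter (fun p => p.2 = v ∧ ¬(p ∈ D1 ↔ p ∈ D2)) with hInS
  have step1 : ∀ v, (OutS v D1).card = (OutS v D2).card := by
    intro v
    have key : ∀ D : Finset (V × V),
        (D.filter (fun p => p.1 = v)).card
          = (OutS v D).card + (D.filter (fun p => p.1 = v ∧ (p ∈ D1 ↔ p ∈ D2))).card := by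
      intro D
      simp only [hOutS]
      have := Finset.card_filter_add_card_filter_not
        (s := D.filter (fun p => p.1 = v)) (p := fun p => ¬(p ∈ D1 ↔ p ∈ D2))
      rw [Finset.filter_filter, Finset.filter_filter] at this
      simp only [not_not] at this
      omega
    have hnegeq : D1.filter (fun p => p.1 = v ∧ (p ∈ D1 ↔ p ∈ D2))
        = D2.filter (fun p => p.1 = v ∧ (p ∈ D1 ↔ p ∈ D2)) := by
      ext p
      simp only [Finset.mem_filter]
      tauto
    have c1 := key D1
    have c2 := key D2
    have hα1 := ho1 v
    have hα2 := ho2 v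
    rw [outD] at hα1 hα2
    rw [hnegeq] at c1
    omega
  have step2 : ∀ v, (OutS v D2).card = (InS v D1).card := by
    intro v
    refine Finset.card_bij' (fun p _ => p.swap) (fun p _ => p.swap) ?_ ?_
      (fun p _ => Prod.swap_swap p) (fun p _ => Prod.swap_swap p)
    · intro p hp
      simp only [hOutS, Finset.mem_filter] at hp
      obtain ⟨hpD2, hp1, hpd⟩ := hp
      have hadj : G.Adj p.1 p.2 := h2.1 p hpD2
      have hpD1 : p ∉ D1 := fun hmem => hpd ⟨fun _ => hpD2, fun _ => hmem⟩
      have hswD1 : p.swap ∈ D1 := by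
        have := h1.2 p.1 p.2 hadj
        rw [Prod.mk.eta] at this
        have : (p.2, p.1) ∈ D1 := by tauto
        simpa [Prod.swap] using this
      have hswD2 : p.swap ∉ D2 := by
        have := h2.2 p.1 p.2 hadj
        rw [Prod.mk.eta] at this
        have : (p.2, p.1) ∉ D2 := by tauto
        simpa [Prod.swap] using this
      simp only [hInS, Finset.mem_filter]
      exact ⟨hswD1, by simp [hp1], fun h => hswD2 (h.mp hswD1)⟩
    · intro p hp
      simp only [hInS, Finset.mem_filter] at hp
      obtain ⟨hpD1, hp2, hpd⟩ := hp
      have hadj : G.Adj p.1 p.2 := h1.1 p hpD1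
      have hpD2 : p ∉ D2 := fun hmem => hpd ⟨fun _ => hmem, fun _ => hpD1⟩
      have hswD2 : p.swap ∈ D2 := by
        have := h2.2 p.1 p.2 hadj
        rw [Prod.mk.eta] at this
        have : (p.2, p.1) ∈ D2 := by tauto
        simpa [Prod.swap] using this
      have hswD1 : p.swap ∉ D1 := by
        have := h1.2 p.1 p.2 hadj
        rw [Prod.mk.eta] at this
        have : (p.2, p.1) ∉ D1 := by tauto
        simpa [Prod.swap] using this
      simp only [hOutS, Finset.mem_filter]
      exact ⟨hswD2, by simp [hp2], fun h => hswD1 (h.mpr hswD2)⟩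
  -- a differing pair exists
  have hex : ∃ a b, Dif a b := by
    have : ∃ p : V × V, ¬(p ∈ D1 ↔ p ∈ D2) := by
      by_contra hall
      push_neg at hall
      exact hne (Finset.ext fun p => hall p)
    obtain ⟨p, hp⟩ := this
    have hadj : G.Adj p.1 p.2 := by
      by_cases hm : p ∈ D1
      · exact h1.1 p hm
      · have : p ∈ D2 := by tauto
        exact h2.1 p this
    exact ⟨p.1, p.2, hadj, by rwa [Prod.mk.eta]⟩
  -- support of differences
  set sup : Set V := {v | ∃ b, Dif v b} with hsup
  have hsupne : sup.Nonempty := by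
    obtain ⟨a, b, hab⟩ := hex
    exact ⟨a, b, hab⟩
  obtain ⟨v, hvsup, hvmax⟩ := Set.exists_max_image sup (fun x => T.dist r x)
    (Set.toFinite _) hsupne
  obtain ⟨b, hb⟩ := hvsup
  -- there are two distinct difference-neighbours of v
  have hneigh : ∃ u w : V, u ≠ w ∧ Dif v u ∧ Dif v w := by
    have houtin : (OutS v D1).Nonempty ∧ (InS v D1).Nonempty := by
      have hcards := (step1 v).trans (step2 v)
      by_cases hm : (v, b) ∈ D1
      · have hmem : (v, b) ∈ OutS v D1 := by
          simp only [hOutS, Finset.mem_filter]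
          exact ⟨hm, by simp, hb.2⟩
        have h1' : (OutS v D1).Nonempty := ⟨_, hmem⟩
        have := Finset.card_pos.mpr h1'
        exact ⟨h1', Finset.card_pos.mp (by omega)⟩
      · have hm' : (b, v) ∈ D1 := by
          have := h1.2 v b hb.1; tauto
        have hmem : (b, v) ∈ InS v D1 := by
          simp only [hInS, Finset.mem_filter]
          exact ⟨hm', by simp, (hsw v b hb).2⟩
        have h1' : (InS v D1).Nonempty := ⟨_, hmem⟩
        have := Finset.card_pos.mpr h1'
        exact ⟨Finset.card_pos.mp (by omega), h1'⟩
    obtain ⟨⟨p, hp⟩, ⟨q, hq⟩⟩ := houtin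
    simp only [hOutS, Finset.mem_filter] at hp
    simp only [hInS, Finset.mem_filter] at hq
    obtain ⟨hpD1, hp1, hpd⟩ := hp
    obtain ⟨hqD1, hq2, hqd⟩ := hq
    refine ⟨q.1, p.2, ?_, ?_, ?_⟩
    · intro heq
      have h12 := h1.2 q.1 q.2 (h1.1 q hqD1)
      rw [Prod.mk.eta] at h12
      have : (q.2, q.1) ∉ D1 := by tauto
      apply this
      have : (q.2, q.1) = p := by rw [hq2, heq, ← hp1, Prod.mk.eta]
      rw [this]; exact hpD1
    · have hadj : G.Adj q.1 q.2 := h1.1 q hqD1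
      rw [hq2] at hadj
      refine hsw q.1 v ⟨?_, ?_⟩
      · exact hadj
      · have : (q.1, v) = q := by rw [← hq2, Prod.mk.eta]
        rw [this]; exact hqd
    · have hadj : G.Adj p.1 p.2 := h1.1 p hpD1
      rw [hp1] at hadj
      refine ⟨hadj, ?_⟩
      have : (v, p.2) = p := by rw [← hp1, Prod.mk.eta]
      rw [this]; exact hpd
  obtain ⟨u, w, huw, hu, hw⟩ := hneigh
  have hconnT := hTree.1
  have hacT := hTree.2
  -- distance facts
  have hd1 : ∀ x y : V, T.Adj x y → T.dist r y ≤ T.dist r x + 1 := by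
    intro x y hxy
    have := hconnT.dist_triangle (u := r) (v := x) (w := y)
    have h2' : T.dist x y = 1 := dist_eq_one_iff_adj.mpr hxy
    omega
  have hdne : ∀ x y : V, T.Adj x y → T.dist r x ≠ T.dist r y := by
    intro x y hxy heq
    obtain ⟨px, hpx, hlx⟩ := (hconnT.preconnected r x).exists_path_of_dist
    have hyx : y ∉ px.support := by
      intro hy
      have htake := Walk.length_takeUntil_le px hy
      have hdy : T.dist r y ≤ (px.takeUntil y hy).length := dist_le _
      have hspec := congrArg Walk.length (px.take_spec hy)
      rw [Walk.length_append] at hspec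
      have hdrop0 : (px.dropUntil y hy).length = 0 := by omega
      exact hxy.ne' (Walk.eq_of_length_eq_zero hdrop0)
    have hq : (px.concat hxy).IsPath := by
      rw [Walk.isPath_def, Walk.support_concat]
      rw [List.nodup_append]
      exact ⟨hpx.support_nodup, List.nodup_singleton _,
        by intro a ha b hb h; simp only [List.mem_singleton] at hb; subst hb; subst h; exact hyx ha⟩
    obtain ⟨py, hpy, hly⟩ := (hconnT.preconnected r y).exists_path_of_dist
    have := hacT.path_unique ⟨py, hpy⟩ ⟨px.concat hxy, hq⟩
    have hval : py = px.concat hxy := congrArg Subtype.val this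
    have := congrArg Walk.length hval
    rw [Walk.length_concat] at this
    omega
  have hTu : T.Adj v u := hTadj v u hu
  have hTw : T.Adj v w := hTadj v w hw
  have husup : u ∈ sup := ⟨v, hsw v u hu⟩
  have hwsup : w ∈ sup := ⟨v, hsw v w hw⟩
  have hule := hvmax u husup
  have hwle := hvmax w hwsup
  have huv := hdne v u hTu
  have hwv := hdne v w hTw
  have hub := hd1 u v hTu.symm
  have hwb := hd1 w v hTw.symm
  have hdu : T.dist r u + 1 = T.dist r v := by omega
  have hdw : T.dist r w + 1 = T.dist r v := by omega
  -- two paths from r to v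
  obtain ⟨pu, hpu, hlu⟩ := (hconnT.preconnected r u).exists_path_of_dist
  obtain ⟨pw, hpw, hlw⟩ := (hconnT.preconnected r w).exists_path_of_dist
  have hvpu : v ∉ pu.support := by
    intro hv
    have htake := Walk.length_takeUntil_le pu hv
    have hdv : T.dist r v ≤ (pu.takeUntil v hv).length := dist_le _
    omega
  have hvpw : v ∉ pw.support := by
    intro hv
    have htake := Walk.length_takeUntil_le pw hv
    have hdv : T.dist r v ≤ (pw.takeUntil v hv).length := dist_le _
    omega
  have hq1 : (pu.concat hTu.symm).IsPath := by
    rw [Walk.isPath_def, Walk.support_concat, List.nodup_append]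
    exact ⟨hpu.support_nodup, List.nodup_singleton _,
      by intro a ha b hb h; simp only [List.mem_singleton] at hb; subst hb; subst h; exact hvpu ha⟩
  have hq2 : (pw.concat hTw.symm).IsPath := by
    rw [Walk.isPath_def, Walk.support_concat, List.nodup_append]
    exact ⟨hpw.support_nodup, List.nodup_singleton _,
      by intro a ha b hb h; simp only [List.mem_singleton] at hb; subst hb; subst h; exact hvpw ha⟩
  have hpq := hacT.path_unique ⟨pu.concat hTu.symm, hq1⟩ ⟨pw.concat hTw.symm, hq2⟩
  have hval : pu.concat hTu.symm = pw.concat hTw.symm := congrArg Subtype.val hpq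
  have hrev := congrArg Walk.reverse hval
  rw [Walk.reverse_concat, Walk.reverse_concat] at hrev
  have := congrArg (fun q => Walk.getVert q 1) hrev
  simp only [Walk.getVert_cons_succ, Walk.getVert_zero] at this
  exact huw this

/-- A connected simple graph on `n` vertices with `m` edges has at most
`2 ^ (m - n + 1)` `α`-orientations. -/
theorem alpha_orientations_le_of_connected
    {V : Type*} [Fintype V] [DecidableEq V]
    (G : SimpleGraph V) [DecidableRel G.Adj] (α : V → ℕ)
    (hconn : G.Connected) :
    {D : Finset (V × V) | IsOrient G D ∧ ∀ v, outD D v = α v}.ncard ≤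
      2 ^ (G.edgeFinset.card - Fintype.card V + 1) := by
  classical
  obtain ⟨T, hTG, hTree⟩ := exists_spanning_tree G hconn
  haveI : Fintype T.edgeSet := (Set.toFinite _).fintype
  set TF : Finset (Sym2 V) := T.edgeFinset with hTF
  have hTsub : TF ⊆ G.edgeFinset := by
    intro e he
    rw [hTF, mem_edgeFinset] at he
    rw [mem_edgeFinset]
    exact edgeSet_mono hTG he
  have hTcard : TF.card + 1 = Fintype.card V := hTree.card_edgeFinset
  set F : Finset (Sym2 V) := G.edgeFinset \ TF with hF
  have hFcard : F.card = G.edgeFinset.card - TF.card := by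
    rw [hF, Finset.card_sdiff_of_subset hTsub]
  have hmn : (Fintype.card V - 1) ≤ G.edgeFinset.card := by
    have := Finset.card_le_card hTsub
    omega
  set 𝒮 : Set (Finset (V × V)) :=
    {D | IsOrient G D ∧ ∀ v, outD D v = α v} with h𝒮
  set g : Finset (V × V) → Finset (Sym2 V) := fun D => F.filter (fun e => e.out ∈ D) with hg
  have hrep : ∀ e : Sym2 V, Sym2.mk e.out.1 e.out.2 = e := fun e => Quot.out_eq e
  have hinj : Set.InjOn g 𝒮 := by
    intro D1 hD1 D2 hD2 heq
    refine key_inj G T hTG hTree α D1 D2 hD1.1 hD2.1 hD1.2 hD2.2 ?_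
    intro a b hab hnT
    have heF : s(a, b) ∈ F := by
      rw [hF, Finset.mem_sdiff, mem_edgeFinset, hTF, mem_edgeFinset]
      exact ⟨hab, fun h => hnT h⟩
    have hiff : (s(a, b)).out ∈ D1 ↔ (s(a, b)).out ∈ D2 := by
      have h1 := Finset.ext_iff.mp heq ((s(a, b)))
      simp only [hg, Finset.mem_filter, heF, true_and] at h1
      exact h1
    have hout : (s(a, b)).out = (a, b) ∨ (s(a, b)).out = (b, a) := by
      have := hrep s(a, b)
      rw [Sym2.mk_eq_mk_iff (q := (a, b))] at this
      tauto
    rcases hout with h | h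
    · rwa [h] at hiff
    · rw [h] at hiff
      have e1 := hD1.1.2 a b hab
      have e2 := hD2.1.2 a b hab
      have f1 := hD1.1.2 b a hab.symm
      have f2 := hD2.1.2 b a hab.symm
      tauto
  calc 𝒮.ncard = (g '' 𝒮).ncard := (Set.ncard_image_of_injOn hinj).symm
    _ ≤ (↑F.powerset : Set (Finset (Sym2 V))).ncard := by
        apply Set.ncard_le_ncard _ (F.powerset).finite_toSet
        rintro _ ⟨D, _, rfl⟩
        simp only [Finset.coe_powerset, Set.mem_preimage, Set.mem_powerset_iff, hg]
        exact Finset.coe_subset.mpr (Finset.filter_subset _ _)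
    _ = F.powerset.card := Set.ncard_coe_finset _
    _ = 2 ^ F.card := Finset.card_powerset F
    _ ≤ 2 ^ (G.edgeFinset.card - Fintype.card V + 1) := by
        apply Nat.pow_le_pow_right (by norm_num)
        omega
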